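/- Let 0 < δ < 1 and let A ∈ R^{m×N} have restricted isometry constant δ_s(A) ≤ δ. Let r = min{1,q} for p < q ≤ 2, 0 < p < 1. Then every v ∈ ker A satisfies ||v||_q ≤ 2^{1/r} (((1+δ)/(1-δ))^{1/2}) s^{-(1/r - 1/q)} ||v||_r. -/

import Mathlib

open Finset Real

/-- The ℓp (quasi-)norm on ℝ^N: `(∑ |x ℓ|^p)^(1/p)`. -/
noncomputable def pnorm (p : ℝ) {N : ℕ} (x : Fin N → ℝ) : ℝ :=
  (∑ i, |x i| ^ p) ^ (1 / p)

/-- A vector is `s`-sparse if at most `s` of its coordinates are nonzero. -/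
def IsSparse (s : ℕ) {N : ℕ} (z : Fin N → ℝ) : Prop :=
  ∃ S : Finset (Fin N), S.card ≤ s ∧ ∀ i ∉ S, z i = 0

lemma pnorm_nonneg (p : ℝ) {N : ℕ} (x : Fin N → ℝ) : 0 ≤ pnorm p x :=
  Real.rpow_nonneg (Finset.sum_nonneg fun _ _ => Real.rpow_nonneg (abs_nonneg _) _) _

lemma pnorm_two_eq {N : ℕ} (x : Fin N → ℝ) : pnorm 2 x = Real.sqrt (∑ i, x i ^ 2) := by
  rw [pnorm, Real.sqrt_eq_rpow]
  congr 1
  refine Finset.sum_congr rfl fun i _ => ?_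
  rw [show (2:ℝ) = ((2:ℕ):ℝ) by norm_num, Real.rpow_natCast, sq_abs]

lemma pnorm_two_sq {N : ℕ} (x : Fin N → ℝ) : pnorm 2 x ^ 2 = ∑ i, x i ^ 2 := by
  rw [pnorm_two_eq, Real.sq_sqrt (Finset.sum_nonneg fun i _ => sq_nonneg _)]

noncomputable def eqv (m : ℕ) : (Fin m → ℝ) ≃ₗ[ℝ] EuclideanSpace ℝ (Fin m) :=
  (WithLp.linearEquiv 2 ℝ (Fin m → ℝ)).symm

lemma norm_eqv {m : ℕ} (x : Fin m → ℝ) : ‖eqv m x‖ = Real.sqrt (∑ j, x j ^ 2) := by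
  rw [EuclideanSpace.norm_eq]
  congr 1
  exact Finset.sum_congr rfl fun j _ => by rw [Real.norm_eq_abs, sq_abs]; rfl

lemma l2_triangle {m : ℕ} {ι : Type*} (K : Finset ι) (w : ι → Fin m → ℝ) :
    Real.sqrt (∑ j, (∑ k ∈ K, w k j) ^ 2) ≤ ∑ k ∈ K, Real.sqrt (∑ j, w k j ^ 2) := by
  have h1 : (fun j => ∑ k ∈ K, w k j) = ∑ k ∈ K, w k := by
    ext j; simp
  calc Real.sqrt (∑ j, (∑ k ∈ K, w k j) ^ 2) = ‖eqv m (∑ k ∈ K, w k)‖ := by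
        rw [norm_eqv]; congr 1; exact Finset.sum_congr rfl fun j _ => by rw [← h1]
    _ = ‖∑ k ∈ K, eqv m (w k)‖ := by rw [map_sum]
    _ ≤ ∑ k ∈ K, ‖eqv m (w k)‖ := norm_sum_le _ _
    _ = ∑ k ∈ K, Real.sqrt (∑ j, w k j ^ 2) := Finset.sum_congr rfl fun k _ => norm_eqv _

lemma holder_sparse {q : ℝ} (hq1 : 1 ≤ q) (hq2 : q ≤ 2) {N s : ℕ}
    (x : Fin N → ℝ) (S : Finset (Fin N)) (hsupp : ∀ i ∉ S, x i = 0) (hcard : S.card ≤ s) :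
    ∑ i, |x i| ^ q ≤ (s : ℝ) ^ (1 - q / 2) * (∑ i, x i ^ 2) ^ (q / 2) := by
  have hq0 : 0 < q := lt_of_lt_of_le one_pos hq1
  have hB0 : (0:ℝ) ≤ ∑ i, x i ^ 2 := Finset.sum_nonneg fun i _ => sq_nonneg _
  have hLHS : ∑ i, |x i| ^ q = ∑ i ∈ S, |x i| ^ q := by
    refine (Finset.sum_subset (Finset.subset_univ S) fun i _ hi => ?_).symm
    rw [hsupp i hi, abs_zero, Real.zero_rpow (ne_of_gt hq0)]
  rcases Nat.eq_zero_or_pos S.card with hc0 | hcpos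
  · rw [hLHS, Finset.card_eq_zero.mp hc0, Finset.sum_empty]
    positivity
  set c : ℝ := (S.card : ℝ) with hc
  have hcpos' : (0:ℝ) < c := by rw [hc]; exact_mod_cast hcpos
  set A := ∑ i ∈ S, |x i| ^ q with hA
  set B := ∑ i ∈ S, x i ^ 2 with hB
  have hA0 : 0 ≤ A := Finset.sum_nonneg fun i _ => Real.rpow_nonneg (abs_nonneg _) _
  have hB0' : 0 ≤ B := Finset.sum_nonneg fun i _ => sq_nonneg _
  have key : ((1 / c) * A) ^ (2 / q) ≤ (1 / c) * B := by
    have := Real.rpow_arith_mean_le_arith_mean_rpow S (fun _ => 1 / c) (fun i => |x i| ^ q)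
      (fun i _ => by positivity)
      (by rw [Finset.sum_const, nsmul_eq_mul]; field_simp; exact hc.symm)
      (fun i _ => Real.rpow_nonneg (abs_nonneg _) _)
      ((one_le_div hq0).mpr hq2)
    calc ((1 / c) * A) ^ (2 / q) = (∑ i ∈ S, (1/c) * |x i| ^ q) ^ (2/q) := by
          rw [← Finset.mul_sum]
      _ ≤ ∑ i ∈ S, (1/c) * (|x i| ^ q) ^ (2/q) := this
      _ = (1/c) * B := by
          rw [← Finset.mul_sum]
          congr 1
          refine Finset.sum_congr rfl fun i _ => ?_
          rw [← Real.rpow_mul (abs_nonneg _), show q * (2/q) = 2 by field_simp,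
            show (2:ℝ) = ((2:ℕ):ℝ) by norm_num, Real.rpow_natCast, sq_abs]
  have h2 : (1 / c) * A ≤ ((1 / c) * B) ^ (q / 2) := by
    have e1 : ((((1/c) * A) ^ (2/q)) : ℝ) ^ (q/2) = (1/c) * A := by
      rw [← Real.rpow_mul (by positivity)]
      rw [show 2 / q * (q / 2) = 1 by field_simp, Real.rpow_one]
    calc (1/c) * A = (((1/c) * A) ^ (2/q)) ^ (q/2) := e1.symm
      _ ≤ ((1/c) * B) ^ (q/2) := Real.rpow_le_rpow (by positivity) key (by positivity)
  have h3 : A ≤ c ^ (1 - q/2) * B ^ (q/2) := by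
    have := mul_le_mul_of_nonneg_left h2 (le_of_lt hcpos')
    rw [show c * ((1/c) * A) = A by field_simp] at this
    refine this.trans (le_of_eq ?_)
    rw [Real.mul_rpow (by positivity) hB0', ← mul_assoc]
    congr 1
    rw [Real.rpow_sub hcpos', Real.rpow_one, Real.div_rpow (by norm_num) (le_of_lt hcpos'),
      Real.one_rpow]
    field_simp
  rw [hLHS]
  refine h3.trans (mul_le_mul ?_ ?_ (by positivity) (by positivity))
  · exact Real.rpow_le_rpow (le_of_lt hcpos') (by rw [hc]; exact_mod_cast hcard) (by linarith)
  · refine Real.rpow_le_rpow hB0' ?_ (by positivity)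
    exact Finset.sum_le_sum_of_subset_of_nonneg (Finset.subset_univ S) fun i _ _ => sq_nonneg _

lemma real_add_rpow {t : ℝ} (ht0 : 0 < t) (ht1 : t ≤ 1) (a b : ℝ) (ha : 0 ≤ a) (hb : 0 ≤ b) :
    (a + b) ^ t ≤ a ^ t + b ^ t := by
  have h := NNReal.rpow_add_rpow_le (a.toNNReal) (b.toNNReal) ht0 ht1
  have := (NNReal.coe_le_coe).mpr h
  push_cast [NNReal.coe_rpow] at this
  rw [Real.coe_toNNReal a ha, Real.coe_toNNReal b hb] at this
  simp only [Real.rpow_one, one_div_one, Real.rpow_natCast] at this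
  have h2 := Real.rpow_le_rpow (by positivity) this (le_of_lt ht0)
  rwa [← Real.rpow_mul (by positivity), one_div, inv_mul_cancel₀ (ne_of_gt ht0),
    Real.rpow_one] at h2

lemma rpow_sum_le {ι : Type*} (K : Finset ι) (f : ι → ℝ) (hf : ∀ k ∈ K, 0 ≤ f k)
    {t : ℝ} (ht0 : 0 < t) (ht1 : t ≤ 1) :
    (∑ k ∈ K, f k) ^ t ≤ ∑ k ∈ K, f k ^ t := by
  induction K using Finset.cons_induction with
  | empty => simp [Real.zero_rpow (ne_of_gt ht0)]
  | cons a K ha ih =>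
    rw [Finset.sum_cons, Finset.sum_cons]
    calc (f a + ∑ k ∈ K, f k) ^ t ≤ f a ^ t + (∑ k ∈ K, f k) ^ t :=
          real_add_rpow ht0 ht1 _ _ (hf a (Finset.mem_cons_self a K))
            (Finset.sum_nonneg fun k hk => hf k (Finset.mem_cons_of_mem hk))
      _ ≤ f a ^ t + ∑ k ∈ K, f k ^ t := by
          have := ih fun k hk => hf k (Finset.mem_cons_of_mem hk)
          linarith

lemma sum_range_mul_eq (s : ℕ) (f : ℕ → ℝ) (M : ℕ) :
    ∑ t ∈ Finset.range (M * s), f t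
      = ∑ k ∈ Finset.range M, ∑ t ∈ Finset.Ico (k*s) ((k+1)*s), f t := by
  induction M with
  | zero => simp
  | succ M ih =>
    rw [Finset.sum_range_succ, ← ih, Finset.range_eq_Ico, Finset.range_eq_Ico]
    exact (Finset.sum_Ico_consecutive f (Nat.zero_le _)
      (Nat.mul_le_mul_right s (Nat.le_succ M))).symm

lemma sum_range_le_of_zero {N : ℕ} (a : ℕ → ℝ) (ha : ∀ t, 0 ≤ a t)
    (hz : ∀ t, N ≤ t → a t = 0) (M : ℕ) :
    ∑ t ∈ Finset.range M, a t ≤ ∑ t ∈ Finset.range N, a t := by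
  rcases le_total M N with h | h
  · exact Finset.sum_le_sum_of_subset_of_nonneg (Finset.range_subset_range.mpr h)
      (fun t _ _ => ha t)
  · rw [Finset.range_eq_Ico, ← Finset.sum_Ico_consecutive a (Nat.zero_le N) h]
    have : ∑ t ∈ Finset.Ico N M, a t = 0 :=
      Finset.sum_eq_zero fun t ht => hz t (Finset.mem_Ico.mp ht).1
    simp [this]

set_option maxHeartbeats 1000000 in
theorem kernel_norm_estimate (p q δ : ℝ) (hp0 : 0 < p) (hp1 : p < 1)
    (hpq : p < q) (hq2 : q ≤ 2) (hδ0 : 0 < δ) (hδ1 : δ < 1)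
    {N m s : ℕ} (hs : 0 < s) (A : Matrix (Fin m) (Fin N) ℝ)
    (hRIP : ∀ x : Fin N → ℝ, IsSparse s x →
      (1 - δ) * pnorm 2 x ^ 2 ≤ pnorm 2 (Matrix.mulVec A x) ^ 2 ∧
        pnorm 2 (Matrix.mulVec A x) ^ 2 ≤ (1 + δ) * pnorm 2 x ^ 2)
    (v : Fin N → ℝ) (hv : Matrix.mulVec A v = 0) :
    pnorm q v ≤ 2 ^ (1 / min 1 q) * ((1 + δ) / (1 - δ)) ^ ((1 : ℝ) / 2) *
      (s : ℝ) ^ (-(1 / min 1 q - 1 / q)) * pnorm (min 1 q) v := by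
  have hq0 : 0 < q := lt_trans hp0 hpq
  have hC1 : (1:ℝ) ≤ ((1 + δ) / (1 - δ)) ^ ((1:ℝ)/2) := by
    refine Real.one_le_rpow ?_ (by norm_num)
    rw [le_div_iff₀ (by linarith)]
    linarith
  rcases le_or_gt q 1 with hq1 | hq1
  · -- trivial case
    have hmin : min 1 q = q := min_eq_right hq1
    rw [hmin, sub_self, neg_zero, Real.rpow_zero]
    have h1 : (1:ℝ) ≤ 2 ^ (1/q) := Real.one_le_rpow one_le_two (by positivity)
    have h0 := pnorm_nonneg q v
    nlinarith [mul_le_mul h1 hC1 (by norm_num) (by positivity)]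
  · -- main case: q > 1, r = 1
    have hmin : min 1 q = 1 := min_eq_left (le_of_lt hq1)
    rw [hmin]
    have hs' : (0:ℝ) < s := by exact_mod_cast hs
    have hq1' : (1:ℝ) ≤ q := le_of_lt hq1
    set C : ℝ := ((1 + δ) / (1 - δ)) ^ ((1:ℝ)/2) with hCdef
    have hC0 : (0:ℝ) < C := lt_of_lt_of_le one_pos hC1
    have hpn1 : pnorm 1 v = ∑ i, |v i| := by
      simp [pnorm]
    rcases Nat.eq_zero_or_pos N with hN0 | hN
    · subst hN0
      have h0 : pnorm q v = 0 := by
        simp [pnorm, Real.zero_rpow (inv_ne_zero (ne_of_gt hq0)), Real.zero_rpow (by positivity : 1/q ≠ 0)]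
      rw [h0]
      exact mul_nonneg (mul_nonneg (mul_nonneg (by positivity) (le_of_lt hC0))
        (Real.rpow_nonneg (le_of_lt hs') _)) (pnorm_nonneg 1 v)
    -- sorting
    set σ : Equiv.Perm (Fin N) := Tuple.sort (fun i => -|v i|) with hσ
    have hmono := Tuple.monotone_sort (fun i => -|v i|)
    set a : ℕ → ℝ := fun t => if h : t < N then |v (σ ⟨t, h⟩)| else 0 with hadef
    have ha0 : ∀ t, 0 ≤ a t := by
      intro t; simp only [hadef]; split
      · exact abs_nonneg _
      · exact le_refl 0
    have hzz : ∀ t, N ≤ t → a t = 0 := by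
      intro t ht; simp only [hadef]; exact dif_neg (by omega)
    have haanti : ∀ t t' : ℕ, t ≤ t' → a t' ≤ a t := by
      intro t t' h
      by_cases h' : t' < N
      · have h2 : t < N := lt_of_le_of_lt h h'
        simp only [hadef]
        rw [dif_pos h', dif_pos h2]
        have := hmono (show (⟨t, h2⟩ : Fin N) ≤ ⟨t', h'⟩ from h)
        simpa [hσ] using this
      · rw [hzz t' (by omega)]
        exact ha0 t
    have hav : ∀ i : Fin N, a ((σ.symm i : ℕ)) = |v i| := by
      intro i
      simp only [hadef]
      rw [dif_pos (σ.symm i).isLt]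
      congr 1
      simp
    set u : ℕ → Fin N → ℝ :=
      fun k i => if k * s ≤ (σ.symm i : ℕ) ∧ (σ.symm i : ℕ) < (k+1) * s then v i else 0
      with hudef
    -- transfer of sums
    have key : ∀ (k : ℕ) (F : ℝ → ℝ), F 0 = 0 →
        ∑ i, F (|u k i|) = ∑ t ∈ Finset.Ico (k*s) ((k+1)*s), F (a t) := by
      intro k F hF
      have h1 : ∀ i : Fin N, F (|u k i|) =
          (fun t : ℕ => if k*s ≤ t ∧ t < (k+1)*s then F (a t) else 0) (σ.symm i : ℕ) := by
        intro i
        simp only [hudef]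
        by_cases hc : k*s ≤ (σ.symm i : ℕ) ∧ (σ.symm i : ℕ) < (k+1)*s
        · rw [if_pos hc, if_pos hc, hav i]
        · rw [if_neg hc, if_neg hc, abs_zero, hF]
      calc ∑ i, F (|u k i|)
          = ∑ i : Fin N,
            (fun t : ℕ => if k*s ≤ t ∧ t < (k+1)*s then F (a t) else 0) ((σ.symm i : ℕ)) :=
            Finset.sum_congr rfl fun i _ => h1 i
        _ = ∑ j : Fin N,
            (fun t : ℕ => if k*s ≤ t ∧ t < (k+1)*s then F (a t) else 0) ((j : ℕ)) :=
            Fintype.sum_equiv σ.symm _ _ (fun i => rfl)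
        _ = ∑ t ∈ Finset.range N, (if k*s ≤ t ∧ t < (k+1)*s then F (a t) else 0) :=
            Fin.sum_univ_eq_sum_range (fun t => if k*s ≤ t ∧ t < (k+1)*s then F (a t) else 0) N
        _ = ∑ t ∈ (Finset.range N).filter (fun t => k*s ≤ t ∧ t < (k+1)*s), F (a t) :=
            (Finset.sum_filter _ _).symm
        _ = ∑ t ∈ (Finset.Ico (k*s) ((k+1)*s)).filter (fun t => t < N), F (a t) := by
            refine Finset.sum_congr ?_ (fun _ _ => rfl)
            ext t
            simp only [Finset.mem_filter, Finset.mem_range, Finset.mem_Ico]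
            tauto
        _ = ∑ t ∈ Finset.Ico (k*s) ((k+1)*s), F (a t) := by
            refine Finset.sum_subset (Finset.filter_subset _ _) (fun t ht hnt => ?_)
            rw [hzz t ?_, hF]
            simp only [Finset.mem_filter, ht, true_and] at hnt
            omega
    -- sparsity
    have husp : ∀ k, IsSparse s (u k) := by
      intro k
      refine ⟨Finset.univ.filter
        (fun i => k*s ≤ (σ.symm i : ℕ) ∧ (σ.symm i : ℕ) < (k+1)*s), ?_, ?_⟩
      · calc (Finset.univ.filter
            (fun i => k*s ≤ (σ.symm i : ℕ) ∧ (σ.symm i : ℕ) < (k+1)*s)).card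
            ≤ (Finset.Ico (k*s) ((k+1)*s)).card := by
              refine Finset.card_le_card_of_injOn (fun i => (σ.symm i : ℕ)) ?_ ?_
              · intro i hi
                simp only [Finset.coe_filter, Finset.mem_filter, Set.mem_setOf_eq, Finset.mem_coe] at hi
                exact Finset.mem_Ico.mpr hi.2
              · intro i _ j _ h
                exact σ.symm.injective (Fin.val_injective h)
          _ = s := by rw [Nat.card_Ico, Nat.succ_mul]; omega
      · intro i hi
        simp only [Finset.mem_filter, Finset.mem_univ, true_and] at hi
        simp only [hudef]
        exact if_neg hi
    -- decomposition
    have hdecomp : (∑ k ∈ Finset.range N, u k) = v := by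
      funext i
      rw [Finset.sum_apply]
      have htN : ((σ.symm i : ℕ)) < N := (σ.symm i).isLt
      rw [Finset.sum_eq_single ((σ.symm i : ℕ) / s)]
      · simp only [hudef]
        rw [if_pos ⟨Nat.div_mul_le_self _ s,
          (Nat.div_lt_iff_lt_mul hs).mp (Nat.lt_succ_self _)⟩]
      · intro k _ hne
        simp only [hudef]
        refine if_neg (fun hc => hne ?_)
        have h1 : k ≤ (σ.symm i : ℕ) / s := (Nat.le_div_iff_mul_le hs).mpr hc.1
        have h2 : (σ.symm i : ℕ) / s < k + 1 := (Nat.div_lt_iff_lt_mul hs).mpr hc.2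
        omega
      · intro h
        exact absurd (Finset.mem_range.mpr
          (lt_of_le_of_lt (Nat.div_le_self _ s) htN)) h
    -- block sums
    set S1 : ℕ → ℝ := fun k => ∑ t ∈ Finset.Ico (k*s) ((k+1)*s), a t with hS1def
    set T : ℝ := ∑ t ∈ Finset.range N, a t with hTdef
    have hS1nn : ∀ k, 0 ≤ S1 k := fun k => Finset.sum_nonneg fun t _ => ha0 t
    have hTnn : 0 ≤ T := Finset.sum_nonneg fun t _ => ha0 t
    have hTv : pnorm 1 v = T := by
      rw [hpn1, hTdef]
      calc ∑ i, |v i| = ∑ i : Fin N, a ((σ.symm i : ℕ)) :=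
            Finset.sum_congr rfl fun i _ => (hav i).symm
        _ = ∑ j : Fin N, a ((j : ℕ)) := Fintype.sum_equiv σ.symm _ _ (fun i => rfl)
        _ = ∑ t ∈ Finset.range N, a t := Fin.sum_univ_eq_sum_range _ N
    have hblockanti : ∀ k, S1 (k+1) ≤ S1 k := by
      intro k
      have hsub : ∀ j : ℕ, (j+1)*s - j*s = s := fun j => by rw [Nat.succ_mul]; omega
      simp only [hS1def]
      rw [Finset.sum_Ico_eq_sum_range, Finset.sum_Ico_eq_sum_range, hsub, hsub]
      exact Finset.sum_le_sum fun j _ => haanti _ _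
        (Nat.add_le_add_right (Nat.mul_le_mul_right s (Nat.le_succ k)) j)
    have hS1sum : ∀ k, ∑ i, |u k i| = S1 k := by
      intro k
      simpa using key k (fun x => x) rfl
    -- pointwise bound on later blocks
    have hpoint : ∀ k (i : Fin N), |u (k+1) i| ≤ (1/(s:ℝ)) * S1 k := by
      intro k i
      have hSig0 := hS1nn k
      simp only [hudef]
      by_cases hc : (k+1)*s ≤ (σ.symm i : ℕ) ∧ (σ.symm i : ℕ) < (k+1+1)*s
      · rw [if_pos hc, ← hav i]
        have hle : ∀ t' ∈ Finset.Ico (k*s) ((k+1)*s), a ((σ.symm i : ℕ)) ≤ a t' :=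
          fun t' ht' => haanti _ _ (le_of_lt (lt_of_lt_of_le (Finset.mem_Ico.mp ht').2 hc.1))
        have hsum : (s:ℝ) * a ((σ.symm i : ℕ)) ≤ S1 k := by
          have : ∑ _t ∈ Finset.Ico (k*s) ((k+1)*s), a ((σ.symm i : ℕ)) ≤ S1 k :=
            Finset.sum_le_sum hle
          rwa [Finset.sum_const, Nat.card_Ico, nsmul_eq_mul,
            show (k+1)*s - k*s = s by rw [Nat.succ_mul]; omega] at this
        rw [show (1/(s:ℝ)) * S1 k = S1 k / s by ring, le_div_iff₀ hs']
        nlinarith [hsum]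
      · rw [if_neg hc, abs_zero]
        exact mul_nonneg (by positivity) (hS1nn k)
    -- ℓ2 bound on later blocks
    have hL2 : ∀ k, Real.sqrt (∑ i, u (k+1) i ^ 2) ≤ (s:ℝ)^(-(1:ℝ)/2) * S1 k := by
      intro k
      have hM0 : 0 ≤ (1/(s:ℝ)) * S1 k := mul_nonneg (by positivity) (hS1nn k)
      have h1 : ∑ i, u (k+1) i ^ 2 ≤ ((1/(s:ℝ)) * S1 k) * S1 (k+1) := by
        calc ∑ i, u (k+1) i ^ 2 = ∑ i, |u (k+1) i| * |u (k+1) i| := by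
              refine Finset.sum_congr rfl fun i _ => ?_
              rw [abs_mul_abs_self]; ring
          _ ≤ ∑ i, ((1/(s:ℝ)) * S1 k) * |u (k+1) i| :=
              Finset.sum_le_sum fun i _ =>
                mul_le_mul_of_nonneg_right (hpoint k i) (abs_nonneg _)
          _ = ((1/(s:ℝ)) * S1 k) * S1 (k+1) := by rw [← Finset.mul_sum, hS1sum]
      have h2 : ((1/(s:ℝ)) * S1 k) * S1 (k+1) ≤ (1/(s:ℝ)) * S1 k ^ 2 := by
        have := hblockanti k
        have := hS1nn (k+1)
        nlinarith [hS1nn k]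
      have h3 := Real.sqrt_le_sqrt (le_trans h1 h2)
      refine h3.trans (le_of_eq ?_)
      rw [Real.sqrt_mul (by positivity), Real.sqrt_sq (hS1nn k)]
      congr 1
      rw [show -(1:ℝ)/2 = -(1/2) by norm_num, Real.rpow_neg (le_of_lt hs'),
        ← Real.sqrt_eq_rpow, one_div]
      rw [Real.sqrt_inv]
    -- RIP in sqrt form
    have hRIPlow : ∀ x : Fin N → ℝ, IsSparse s x →
        Real.sqrt (1 - δ) * Real.sqrt (∑ i, x i ^ 2)
          ≤ Real.sqrt (∑ j, Matrix.mulVec A x j ^ 2) := by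
      intro x hx
      have h := (hRIP x hx).1
      rw [pnorm_two_sq, pnorm_two_sq] at h
      have := Real.sqrt_le_sqrt h
      rwa [Real.sqrt_mul (by linarith)] at this
    have hRIPup : ∀ x : Fin N → ℝ, IsSparse s x →
        Real.sqrt (∑ j, Matrix.mulVec A x j ^ 2)
          ≤ Real.sqrt (1 + δ) * Real.sqrt (∑ i, x i ^ 2) := by
      intro x hx
      have h := (hRIP x hx).2
      rw [pnorm_two_sq, pnorm_two_sq] at h
      have := Real.sqrt_le_sqrt h
      rwa [Real.sqrt_mul (by linarith)] at this
    -- kernel decomposition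
    have hker : Matrix.mulVec A (u 0) = - ∑ k ∈ Finset.Ico 1 N, Matrix.mulVec A (u k) := by
      have hsum : ∑ k ∈ Finset.range N, Matrix.mulVec A (u k) = 0 := by
        have : ∑ k ∈ Finset.range N, Matrix.mulVec A (u k)
            = Matrix.mulVec A (∑ k ∈ Finset.range N, u k) := by
          simp only [← Matrix.mulVecLin_apply, ← map_sum]
        rw [this, hdecomp, hv]
      have hsplit : Matrix.mulVec A (u 0) + ∑ k ∈ Finset.Ico 1 N, Matrix.mulVec A (u k)
          = ∑ k ∈ Finset.range N, Matrix.mulVec A (u k) := by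
        rw [Finset.range_eq_Ico,
          ← Finset.sum_Ico_consecutive _ (Nat.zero_le 1) hN]
        congr 1
        simp
      rw [hsum] at hsplit
      exact eq_neg_of_add_eq_zero_left hsplit
    -- step A: ℓ2 bound on block 0
    set W : ℝ := Real.sqrt (∑ i, u 0 i ^ 2) with hWdef
    have hWnn : 0 ≤ W := Real.sqrt_nonneg _
    have hsumIco : ∑ k ∈ Finset.Ico 1 N, S1 (k-1) ≤ T := by
      rw [Finset.sum_Ico_eq_sum_range]
      have he : ∀ j ∈ Finset.range (N-1), S1 (1 + j - 1) = S1 j := fun j _ => by congr 1; omega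
      rw [Finset.sum_congr rfl he]
      calc ∑ j ∈ Finset.range (N-1), S1 j
          = ∑ t ∈ Finset.range ((N-1)*s), a t := (sum_range_mul_eq s a (N-1)).symm
        _ ≤ T := sum_range_le_of_zero a ha0 hzz _
    have hstepA : Real.sqrt (1-δ) * W ≤ Real.sqrt (1+δ) * ((s:ℝ)^(-(1:ℝ)/2) * T) := by
      calc Real.sqrt (1-δ) * W
          ≤ Real.sqrt (∑ j, Matrix.mulVec A (u 0) j ^ 2) := hRIPlow (u 0) (husp 0)
        _ = Real.sqrt (∑ j, (∑ k ∈ Finset.Ico 1 N, Matrix.mulVec A (u k) j) ^ 2) := by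
            congr 1
            refine Finset.sum_congr rfl fun j _ => ?_
            have : Matrix.mulVec A (u 0) j
                = -(∑ k ∈ Finset.Ico 1 N, Matrix.mulVec A (u k) j) := by
              rw [hker]
              simp
            rw [this, neg_sq]
        _ ≤ ∑ k ∈ Finset.Ico 1 N, Real.sqrt (∑ j, Matrix.mulVec A (u k) j ^ 2) :=
            l2_triangle _ _
        _ ≤ ∑ k ∈ Finset.Ico 1 N, Real.sqrt (1+δ) * ((s:ℝ)^(-(1:ℝ)/2) * S1 (k-1)) := by
            refine Finset.sum_le_sum fun k hk => ?_
            have hk1 : 1 ≤ k := (Finset.mem_Ico.mp hk).1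
            refine (hRIPup (u k) (husp k)).trans ?_
            refine mul_le_mul_of_nonneg_left ?_ (Real.sqrt_nonneg (1+δ))
            have := hL2 (k-1)
            rwa [show k - 1 + 1 = k by omega] at this
        _ = Real.sqrt (1+δ) * ((s:ℝ)^(-(1:ℝ)/2) * ∑ k ∈ Finset.Ico 1 N, S1 (k-1)) := by
            rw [← Finset.mul_sum, ← Finset.mul_sum]
        _ ≤ Real.sqrt (1+δ) * ((s:ℝ)^(-(1:ℝ)/2) * T) := by
            refine mul_le_mul_of_nonneg_left ?_ (Real.sqrt_nonneg _)
            exact mul_le_mul_of_nonneg_left hsumIco (Real.rpow_nonneg (le_of_lt hs') _)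
    have hCC : C = Real.sqrt (1+δ) / Real.sqrt (1-δ) := by
      rw [hCdef, ← Real.sqrt_eq_rpow, Real.sqrt_div (by linarith : (0:ℝ) ≤ 1 + δ)]
    have hW : W ≤ C * ((s:ℝ)^(-(1:ℝ)/2) * T) := by
      have h1δ : (0:ℝ) < Real.sqrt (1-δ) := Real.sqrt_pos.mpr (by linarith)
      rw [hCC, div_mul_eq_mul_div, le_div_iff₀ h1δ]
      nlinarith [hstepA]
    -- q-norm bounds
    set Qk : ℕ → ℝ := fun k => ∑ i, |u k i| ^ q with hQdef
    have hQnn : ∀ k, 0 ≤ Qk k :=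
      fun k => Finset.sum_nonneg fun i _ => Real.rpow_nonneg (abs_nonneg _) _
    have hvq : ∑ i, |v i| ^ q ≤ ∑ k ∈ Finset.range N, Qk k := by
      have e1 : ∑ i, |v i| ^ q = ∑ t ∈ Finset.range N, a t ^ q := by
        calc ∑ i, |v i| ^ q = ∑ i : Fin N, a ((σ.symm i : ℕ)) ^ q :=
              Finset.sum_congr rfl fun i _ => by rw [hav]
          _ = ∑ j : Fin N, a ((j:ℕ)) ^ q := Fintype.sum_equiv σ.symm _ _ fun i => rfl
          _ = _ := Fin.sum_univ_eq_sum_range (fun t => a t ^ q) N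
      rw [e1]
      calc ∑ t ∈ Finset.range N, a t ^ q ≤ ∑ t ∈ Finset.range (N*s), a t ^ q :=
            Finset.sum_le_sum_of_subset_of_nonneg
              (Finset.range_subset_range.mpr (Nat.le_mul_of_pos_right N hs))
              (fun t _ _ => Real.rpow_nonneg (ha0 t) q)
        _ = ∑ k ∈ Finset.range N, ∑ t ∈ Finset.Ico (k*s) ((k+1)*s), a t ^ q :=
            sum_range_mul_eq s (fun t => a t ^ q) N
        _ = ∑ k ∈ Finset.range N, Qk k := Finset.sum_congr rfl fun k _ =>
            (key k (fun x => x ^ q) (Real.zero_rpow (ne_of_gt hq0))).symm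
    -- block 0 q-bound
    have hQ0 : Qk 0 ^ (1/q) ≤ (s:ℝ) ^ (1/q - (1:ℝ)/2) * W := by
      have hsq : (0:ℝ) ≤ ∑ i, u 0 i ^ 2 := Finset.sum_nonneg fun i _ => sq_nonneg _
      have h1 : Qk 0 ≤ (s:ℝ)^(1 - q/2) * (∑ i, u 0 i ^2) ^ (q/2) := by
        obtain ⟨S, hScard, hSsupp⟩ := husp 0
        exact holder_sparse hq1' hq2 (u 0) S hSsupp hScard
      have h2 := Real.rpow_le_rpow (hQnn 0) h1 (by positivity : (0:ℝ) ≤ 1/q)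
      refine h2.trans (le_of_eq ?_)
      rw [Real.mul_rpow (Real.rpow_nonneg (le_of_lt hs') _) (Real.rpow_nonneg hsq _),
        ← Real.rpow_mul (le_of_lt hs'), ← Real.rpow_mul hsq]
      have hhalf : q/2 * (1/q) = 1/2 := by
        rw [div_mul_div_comm, mul_one, mul_comm 2 q,
          div_eq_div_iff (by positivity) (by norm_num : (2:ℝ) ≠ 0)]
        ring
      congr 1
      · congr 1
        rw [sub_mul, one_mul, hhalf]
      · rw [hhalf, hWdef, Real.sqrt_eq_rpow]
    -- later blocks q-bound
    have hQk : ∀ k, Qk (k+1) ^ (1/q) ≤ (s:ℝ)^(1/q) * ((1/(s:ℝ)) * S1 k) := by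
      intro k
      set M := (1/(s:ℝ)) * S1 k with hMdef
      have hM0 : 0 ≤ M := mul_nonneg (by positivity) (hS1nn k)
      have h1 : Qk (k+1) ≤ (s:ℝ) * M ^ q := by
        have ht : ∀ i, |u (k+1) i| ^ q ≤ M ^ (q-1) * |u (k+1) i| := by
          intro i
          by_cases h0 : |u (k+1) i| = 0
          · rw [h0, Real.zero_rpow (ne_of_gt hq0), mul_zero]
          · have hpos : 0 < |u (k+1) i| := lt_of_le_of_ne (abs_nonneg _) (Ne.symm h0)
            calc |u (k+1) i| ^ q = |u (k+1) i| ^ (q-1) * |u (k+1) i| := by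
                  rw [← Real.rpow_add_one (ne_of_gt hpos) (q-1), sub_add_cancel]
              _ ≤ M ^ (q-1) * |u (k+1) i| :=
                  mul_le_mul_of_nonneg_right
                    (Real.rpow_le_rpow (abs_nonneg _) (hpoint k i) (by linarith))
                    (abs_nonneg _)
        have hSM : S1 k = (s:ℝ) * M := by rw [hMdef]; field_simp
        calc Qk (k+1) ≤ ∑ i, M ^ (q-1) * |u (k+1) i| := Finset.sum_le_sum fun i _ => ht i
          _ = M ^ (q-1) * S1 (k+1) := by rw [← Finset.mul_sum, hS1sum]
          _ ≤ M ^ (q-1) * ((s:ℝ) * M) := by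
              refine mul_le_mul_of_nonneg_left ?_ (Real.rpow_nonneg hM0 _)
              rw [← hSM]
              exact hblockanti k
          _ = (s:ℝ) * (M ^ (q-1) * M) := by ring
          _ = (s:ℝ) * M ^ q := by
              by_cases hM : M = 0
              · rw [hM, Real.zero_rpow (ne_of_gt hq0),
                  Real.zero_rpow (sub_ne_zero.mpr (ne_of_gt hq1))]
                ring
              · rw [← Real.rpow_add_one hM (q-1), sub_add_cancel]
      have h2 := Real.rpow_le_rpow (hQnn (k+1)) h1 (by positivity : (0:ℝ) ≤ 1/q)
      refine h2.trans (le_of_eq ?_)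
      rw [Real.mul_rpow (le_of_lt hs') (Real.rpow_nonneg hM0 _),
        ← Real.rpow_mul hM0, show q * (1/q) = 1 by field_simp, Real.rpow_one]
    -- assemble
    have hpnq : pnorm q v = (∑ i, |v i| ^ q) ^ (1/q) := rfl
    have hfinal : pnorm q v ≤ Qk 0 ^ (1/q) + ∑ k ∈ Finset.Ico 1 N, Qk k ^ (1/q) := by
      rw [hpnq]
      have h1 := Real.rpow_le_rpow
        (Finset.sum_nonneg fun i _ => Real.rpow_nonneg (abs_nonneg _) _) hvq
        (by positivity : (0:ℝ) ≤ 1/q)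
      refine h1.trans ?_
      have h2 := rpow_sum_le (Finset.range N) Qk (fun k _ => hQnn k)
        (by positivity : (0:ℝ) < 1/q) ((div_le_one hq0).mpr hq1')
      refine h2.trans (le_of_eq ?_)
      rw [Finset.range_eq_Ico, ← Finset.sum_Ico_consecutive _ (Nat.zero_le 1) hN]
      congr 1
      simp
    have hIcoQ : ∑ k ∈ Finset.Ico 1 N, Qk k ^ (1/q) ≤ (s:ℝ)^(1/q) * ((1/(s:ℝ)) * T) := by
      calc ∑ k ∈ Finset.Ico 1 N, Qk k ^ (1/q)
          ≤ ∑ k ∈ Finset.Ico 1 N, (s:ℝ)^(1/q) * ((1/(s:ℝ)) * S1 (k-1)) := by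
            refine Finset.sum_le_sum fun k hk => ?_
            have hk1 : 1 ≤ k := (Finset.mem_Ico.mp hk).1
            have := hQk (k-1)
            rwa [show k - 1 + 1 = k by omega] at this
        _ = (s:ℝ)^(1/q) * ((1/(s:ℝ)) * ∑ k ∈ Finset.Ico 1 N, S1 (k-1)) := by
            rw [← Finset.mul_sum, ← Finset.mul_sum]
        _ ≤ _ := by
            refine mul_le_mul_of_nonneg_left ?_ (Real.rpow_nonneg (le_of_lt hs') _)
            exact mul_le_mul_of_nonneg_left hsumIco (by positivity)
    have e3 : (s:ℝ)^(1/q - (1:ℝ)/2) * (s:ℝ)^(-(1:ℝ)/2) = (s:ℝ)^(1/q - 1) := by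
      rw [← Real.rpow_add hs']
      congr 1
      ring
    have e4 : (s:ℝ)^(1/q) * (1/(s:ℝ)) = (s:ℝ)^(1/q - 1) := by
      rw [Real.rpow_sub hs', Real.rpow_one]
      ring
    have hsT : 0 ≤ (s:ℝ)^(1/q - 1) * T := mul_nonneg (Real.rpow_nonneg (le_of_lt hs') _) hTnn
    rw [hTv]
    calc pnorm q v ≤ Qk 0 ^ (1/q) + ∑ k ∈ Finset.Ico 1 N, Qk k ^ (1/q) := hfinal
      _ ≤ ((s:ℝ)^(1/q - (1:ℝ)/2) * W) + (s:ℝ)^(1/q) * ((1/(s:ℝ)) * T) := add_le_add hQ0 hIcoQ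
      _ ≤ ((s:ℝ)^(1/q - (1:ℝ)/2) * (C * ((s:ℝ)^(-(1:ℝ)/2) * T))) + (s:ℝ)^(1/q) * ((1/(s:ℝ)) * T) := by
          refine add_le_add_left
            (mul_le_mul_of_nonneg_left hW (Real.rpow_nonneg (le_of_lt hs') _)) _
      _ = C * (((s:ℝ)^(1/q - (1:ℝ)/2) * (s:ℝ)^(-(1:ℝ)/2)) * T)
            + ((s:ℝ)^(1/q) * (1/(s:ℝ))) * T := by ring
      _ = C * ((s:ℝ)^(1/q - 1) * T) + (s:ℝ)^(1/q - 1) * T := by rw [e3, e4]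
      _ ≤ 2 * C * ((s:ℝ)^(1/q - 1) * T) := by nlinarith [hsT, hC1]
      _ = 2 ^ ((1:ℝ)/1) * C * (s:ℝ)^(-((1:ℝ)/1 - 1/q)) * T := by
          rw [show ((1:ℝ)/1) = 1 by norm_num, Real.rpow_one,
            show -((1:ℝ) - 1/q) = 1/q - 1 by ring]
          ring
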